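/- arXiv:2507.20332 — 3 statements merged into one kernel-verified Lean document; each statement's English description precedes it below -/
import Mathlib

section
/- Fix 1 ≤ i < j ≤ n and let f ∈ 𝔫* be the coordinate functional x ↦ x_{ij}. Then rk B_f = 2(j − i − 1). (Equivalently, the coadjoint orbit of the dual root vector e*_{ε_i−ε_j} in type A_{n−1} has dimension |Sing(ε_i − ε_j)| = 2(j − i − 1).) -/
open Matrix

/-- The Lie algebra `𝔫` of strictly upper triangular `n × n` matrices over `F`,
as a submodule of the matrix space. -/
def strictUpper (F : Type*) [Field F] (n : ℕ) : Submodule F (Matrix (Fin n) (Fin n) F) where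
  carrier := {x | ∀ i j : Fin n, j ≤ i → x i j = 0}
  add_mem' := by
    intro x y hx hy i j hij
    show x i j + y i j = 0
    rw [hx i j hij, hy i j hij, add_zero]
  zero_mem' := by intro i j _; rfl
  smul_mem' := by
    intro c x hx i j hij
    show c * x i j = 0
    rw [hx i j hij, mul_zero]

lemma mul_mem_strictUpper {F : Type*} [Field F] {n : ℕ} {x y : Matrix (Fin n) (Fin n) F}
    (hx : x ∈ strictUpper F n) (hy : y ∈ strictUpper F n) : x * y ∈ strictUpper F n := by
  intro i j hji
  rw [Matrix.mul_apply]
  refine Finset.sum_eq_zero fun k _ => ?_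
  rcases le_or_gt k i with h | h
  · rw [hx i k h, zero_mul]
  · rw [hy k j (hji.trans h.le), mul_zero]

/-- The Lie bracket (commutator) on `𝔫`, as a bilinear map. -/
def commBracket (F : Type*) [Field F] (n : ℕ) :
    strictUpper F n →ₗ[F] strictUpper F n →ₗ[F] strictUpper F n :=
  LinearMap.mk₂ F
    (fun x y => ⟨(x : Matrix (Fin n) (Fin n) F) * y - (y : Matrix (Fin n) (Fin n) F) * x,
      sub_mem (mul_mem_strictUpper x.2 y.2) (mul_mem_strictUpper y.2 x.2)⟩)
    (fun x x' y => by
      apply Subtype.ext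
      show ((x : Matrix (Fin n) (Fin n) F) + x') * y - (y : Matrix (Fin n) (Fin n) F) * (x + x')
          = ((x : Matrix (Fin n) (Fin n) F) * y - (y : Matrix (Fin n) (Fin n) F) * x)
            + ((x' : Matrix (Fin n) (Fin n) F) * y - (y : Matrix (Fin n) (Fin n) F) * x')
      noncomm_ring)
    (fun c x y => by
      apply Subtype.ext
      show (c • (x : Matrix (Fin n) (Fin n) F)) * y - (y : Matrix (Fin n) (Fin n) F) * (c • x)
          = c • ((x : Matrix (Fin n) (Fin n) F) * y - (y : Matrix (Fin n) (Fin n) F) * x)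
      rw [smul_mul_assoc, mul_smul_comm, smul_sub])
    (fun x y y' => by
      apply Subtype.ext
      show (x : Matrix (Fin n) (Fin n) F) * (y + y') - ((y : Matrix (Fin n) (Fin n) F) + y') * x
          = ((x : Matrix (Fin n) (Fin n) F) * y - (y : Matrix (Fin n) (Fin n) F) * x)
            + ((x : Matrix (Fin n) (Fin n) F) * y' - (y' : Matrix (Fin n) (Fin n) F) * x)
      noncomm_ring)
    (fun c x y => by
      apply Subtype.ext
      show (x : Matrix (Fin n) (Fin n) F) * (c • y) - (c • (y : Matrix (Fin n) (Fin n) F)) * x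
          = c • ((x : Matrix (Fin n) (Fin n) F) * y - (y : Matrix (Fin n) (Fin n) F) * x)
      rw [smul_mul_assoc, mul_smul_comm, smul_sub])

/-- The elementary matrix `E_{ij}` (with `i < j`) as an element of `𝔫`. -/
def Eelt (F : Type*) [Field F] (n : ℕ) (i j : Fin n) (h : i < j) : strictUpper F n :=
  ⟨Matrix.single i j 1, by
    intro a b hba
    refine Matrix.single_apply_of_ne (i := i) (j := j) (c := (1 : F)) (i' := a) (j' := b) ?_
    rintro ⟨rfl, rfl⟩
    exact absurd h (not_lt.mpr hba)⟩

/-- The rank of the alternating bilinear form `B_f(x, y) = f([x, y])` on `𝔫`,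
i.e. the rank of the linear map `𝔫 → 𝔫*`, `x ↦ B_f(x, ·)`. -/
noncomputable def rkB (F : Type*) [Field F] (n : ℕ) (f : Module.Dual F (strictUpper F n)) : ℕ :=
  Module.finrank F (LinearMap.range (LinearMap.compr₂ (commBracket F n) f))

/-- The coordinate functional `x ↦ x i j` on `𝔫`. -/
def entryDual (F : Type*) [Field F] (n : ℕ) (i j : Fin n) :
    Module.Dual F (strictUpper F n) where
  toFun x := (x : Matrix (Fin n) (Fin n) F) i j
  map_add' _ _ := rfl
  map_smul' _ _ := rfl

section Aux

variable (F : Type*) [Field F] (n : ℕ)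

lemma entryDual_apply (i j : Fin n) (x : strictUpper F n) :
    entryDual F n i j x = (x : Matrix (Fin n) (Fin n) F) i j := rfl

lemma bracket_entry (i j : Fin n) (x y : strictUpper F n) :
    entryDual F n i j (commBracket F n x y) =
      ∑ k ∈ Finset.Ioo i j,
        ((x : Matrix (Fin n) (Fin n) F) i k * (y : Matrix (Fin n) (Fin n) F) k j
          - (y : Matrix (Fin n) (Fin n) F) i k * (x : Matrix (Fin n) (Fin n) F) k j) := by
  have h0 : entryDual F n i j (commBracket F n x y) =
      ((x : Matrix (Fin n) (Fin n) F) * y - (y : Matrix (Fin n) (Fin n) F) * x) i j := rfl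
  rw [h0, Matrix.sub_apply, Matrix.mul_apply, Matrix.mul_apply, ← Finset.sum_sub_distrib]
  refine (Finset.sum_subset (Finset.subset_univ _) ?_).symm
  intro k _ hk
  rw [Finset.mem_Ioo, not_and_or, not_lt, not_lt] at hk
  rcases hk with h | h
  · rw [x.2 i k h, y.2 i k h, zero_mul, zero_mul, sub_zero]
  · rw [y.2 k j h, x.2 k j h, mul_zero, mul_zero, sub_zero]

lemma entryDual_Eelt (a b c d : Fin n) (h : c < d) :
    entryDual F n a b (Eelt F n c d h) = if c = a ∧ d = b then 1 else 0 := by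
  rw [entryDual_apply]
  show Matrix.single c d 1 a b = _
  simp [Matrix.single]

lemma T_Eik (i j k : Fin n) (hik : i < k) (hkj : k < j) :
    LinearMap.compr₂ (commBracket F n) (entryDual F n i j) (Eelt F n i k hik)
      = entryDual F n k j := by
  ext y
  rw [LinearMap.compr₂_apply, bracket_entry, entryDual_apply]
  rw [Finset.sum_eq_single k]
  · have h1 : ((Eelt F n i k hik : strictUpper F n) : Matrix (Fin n) (Fin n) F) i k = 1 := by
      show Matrix.single i k 1 i k = 1
      simp
    have h2 : ((Eelt F n i k hik : strictUpper F n) : Matrix (Fin n) (Fin n) F) k j = 0 := by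
      show Matrix.single i k 1 k j = 0
      simp [Matrix.single, hik.ne]
    rw [h1, h2, one_mul, mul_zero, sub_zero]
  · intro m hm hmk
    rw [Finset.mem_Ioo] at hm
    have h1 : ((Eelt F n i k hik : strictUpper F n) : Matrix (Fin n) (Fin n) F) i m = 0 := by
      show Matrix.single i k 1 i m = 0
      simp [Matrix.single, Ne.symm hmk]
    have h2 : ((Eelt F n i k hik : strictUpper F n) : Matrix (Fin n) (Fin n) F) m j = 0 := by
      show Matrix.single i k 1 m j = 0
      simp [Matrix.single, hm.1.ne]
    rw [h1, h2, zero_mul, mul_zero, sub_zero]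
  · intro h
    exact absurd (Finset.mem_Ioo.mpr ⟨hik, hkj⟩) h

lemma T_Ekj (i j k : Fin n) (hik : i < k) (hkj : k < j) :
    LinearMap.compr₂ (commBracket F n) (entryDual F n i j) (Eelt F n k j hkj)
      = - entryDual F n i k := by
  ext y
  rw [LinearMap.compr₂_apply, bracket_entry, LinearMap.neg_apply, entryDual_apply]
  rw [Finset.sum_eq_single k]
  · have h1 : ((Eelt F n k j hkj : strictUpper F n) : Matrix (Fin n) (Fin n) F) i k = 0 := by
      show Matrix.single k j 1 i k = 0
      simp [Matrix.single, hik.ne']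
    have h2 : ((Eelt F n k j hkj : strictUpper F n) : Matrix (Fin n) (Fin n) F) k j = 1 := by
      show Matrix.single k j 1 k j = 1
      simp
    rw [h1, h2, zero_mul, mul_one, zero_sub]
  · intro m hm hmk
    rw [Finset.mem_Ioo] at hm
    have h1 : ((Eelt F n k j hkj : strictUpper F n) : Matrix (Fin n) (Fin n) F) i m = 0 := by
      show Matrix.single k j 1 i m = 0
      simp [Matrix.single, hik.ne']
    have h2 : ((Eelt F n k j hkj : strictUpper F n) : Matrix (Fin n) (Fin n) F) m j = 0 := by
      show Matrix.single k j 1 m j = 0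
      simp [Matrix.single, Ne.symm hmk]
    rw [h1, h2, zero_mul, mul_zero, sub_zero]
  · intro h
    exact absurd (Finset.mem_Ioo.mpr ⟨hik, hkj⟩) h

lemma T_eq_sum (i j : Fin n) (x : strictUpper F n) :
    LinearMap.compr₂ (commBracket F n) (entryDual F n i j) x =
      ∑ k ∈ Finset.Ioo i j,
        ((x : Matrix (Fin n) (Fin n) F) i k • entryDual F n k j
          - (x : Matrix (Fin n) (Fin n) F) k j • entryDual F n i k) := by
  ext y
  rw [LinearMap.compr₂_apply, bracket_entry]
  rw [LinearMap.coe_sum, Finset.sum_apply]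
  refine Finset.sum_congr rfl fun k _ => ?_
  rw [LinearMap.sub_apply, LinearMap.smul_apply, LinearMap.smul_apply,
    entryDual_apply, entryDual_apply, smul_eq_mul, smul_eq_mul]
  ring

end Aux

/-- For the coordinate functional `f = e*_{ε_i - ε_j}` (`i < j`), one has
`rk B_f = 2(j - i - 1)`, i.e. the coadjoint orbit of the dual root vector
`e*_{ε_i - ε_j}` in type `A_{n-1}` has dimension `|Sing(ε_i - ε_j)| = 2(j - i - 1)`. -/
theorem rkB_entryDual (F : Type*) [Field F] [IsAlgClosed F] [CharZero F]
    (n : ℕ) (hn : 2 ≤ n) (i j : Fin n) (hij : i < j) :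
    rkB F n (entryDual F n i j) = 2 * ((j : ℕ) - (i : ℕ) - 1) := by
  classical
  set T := LinearMap.compr₂ (commBracket F n) (entryDual F n i j) with hT
  set s : Finset (Fin n × Fin n) :=
    (Finset.Ioo i j).image (fun k => (k, j)) ∪ (Finset.Ioo i j).image (fun k => (i, k)) with hs
  have hmem : ∀ p ∈ s, p.1 < p.2 := by
    intro p hp
    rw [hs, Finset.mem_union] at hp
    rcases hp with hp | hp <;> obtain ⟨k, hk, rfl⟩ := Finset.mem_image.mp hp <;>
      rw [Finset.mem_Ioo] at hk
    · exact hk.2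
    · exact hk.1
  set v : s → Module.Dual F (strictUpper F n) := fun p => entryDual F n p.1.1 p.1.2 with hv
  -- range T = span of the family v
  have hrange : LinearMap.range T = Submodule.span F (Set.range v) := by
    apply le_antisymm
    · rintro φ ⟨x, rfl⟩
      rw [hT, T_eq_sum]
      refine Submodule.sum_mem _ fun k hk => ?_
      rw [Finset.mem_Ioo] at hk
      refine Submodule.sub_mem _ (Submodule.smul_mem _ _ ?_) (Submodule.smul_mem _ _ ?_)
      · refine Submodule.subset_span ⟨⟨(k, j), ?_⟩, rfl⟩
        exact Finset.mem_union_left _ (Finset.mem_image.mpr ⟨k, Finset.mem_Ioo.mpr hk, rfl⟩)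
      · refine Submodule.subset_span ⟨⟨(i, k), ?_⟩, rfl⟩
        exact Finset.mem_union_right _ (Finset.mem_image.mpr ⟨k, Finset.mem_Ioo.mpr hk, rfl⟩)
    · rw [Submodule.span_le]
      rintro φ ⟨p, rfl⟩
      show v p ∈ LinearMap.range T
      rcases Finset.mem_union.mp p.2 with hp | hp <;> obtain ⟨k, hk, hpk⟩ := Finset.mem_image.mp hp <;>
        rw [Finset.mem_Ioo] at hk <;> simp only [hv] <;> rw [← hpk]
      · exact ⟨Eelt F n i k hk.1, T_Eik F n i j k hk.1 hk.2⟩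
      · have h2 : entryDual F n i k = - T (Eelt F n k j hk.2) := by
          rw [hT, T_Ekj F n i j k hk.1 hk.2, neg_neg]
        show entryDual F n i k ∈ LinearMap.range T
        rw [h2]
        exact neg_mem ⟨Eelt F n k j hk.2, rfl⟩
  -- linear independence of v
  have hLI : LinearIndependent F v := by
    rw [Fintype.linearIndependent_iff]
    intro g hg p
    have heval := congrArg (fun φ : Module.Dual F (strictUpper F n) =>
      φ (Eelt F n p.1.1 p.1.2 (hmem p p.2))) hg
    simp only [LinearMap.coe_sum, Finset.sum_apply, LinearMap.smul_apply,
      LinearMap.zero_apply, smul_eq_mul] at heval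
    rw [Finset.sum_eq_single p] at heval
    · rwa [hv, entryDual_Eelt, if_pos ⟨rfl, rfl⟩, mul_one] at heval
    · intro q _ hqp
      rw [hv, entryDual_Eelt, if_neg, mul_zero]
      rintro ⟨h1, h2⟩
      exact hqp.symm (Subtype.ext (Prod.ext h1 h2))
    · intro h
      exact absurd (Finset.mem_univ p) h
  have hcard : rkB F n (entryDual F n i j) = s.card := by
    rw [rkB, ← hT, hrange, finrank_span_eq_card hLI, Fintype.card_coe]
  have hinj1 : Function.Injective (fun k : Fin n => (k, j)) :=
    fun a b hab => congrArg Prod.fst hab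
  have hinj2 : Function.Injective (fun k : Fin n => (i, k)) :=
    fun a b hab => congrArg Prod.snd hab
  have hdisj : Disjoint ((Finset.Ioo i j).image (fun k => (k, j)))
      ((Finset.Ioo i j).image (fun k => (i, k))) := by
    rw [Finset.disjoint_left]
    rintro p hp1 hp2
    obtain ⟨k, hk, rfl⟩ := Finset.mem_image.mp hp1
    obtain ⟨m, hm, hmp⟩ := Finset.mem_image.mp hp2
    rw [Finset.mem_Ioo] at hk
    exact absurd (congrArg Prod.fst hmp) hk.1.ne
  rw [hcard, hs, Finset.card_union_of_disjoint hdisj,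
    Finset.card_image_of_injective _ hinj1, Finset.card_image_of_injective _ hinj2,
    Fin.card_Ioo, two_mul]
end

section
/- For every f ∈ 𝔫* and all 1 ≤ i < j ≤ n such that there exists (a,b) ∈ Supp(f) with a ≤ i and j ≤ b, one has rk B_f ≥ 2(j − i − 1). -/
open Matrix

/-- The support of a linear form `f ∈ 𝔫*`. -/
def Supp (F : Type*) [Field F] (n : ℕ) (f : Module.Dual F (strictUpper F n)) :
    Set (Fin n × Fin n) :=
  {p | ∃ h : p.1 < p.2, f (Eelt F n p.1 p.2 h) ≠ 0}

/-- A matrix is upper unitriangular if it has `1`'s on the diagonal and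
`0`'s below the diagonal. -/
def IsUnitriangular {F : Type*} [Field F] {n : ℕ} (g : Matrix (Fin n) (Fin n) F) : Prop :=
  (∀ i, g i i = 1) ∧ ∀ i j : Fin n, j < i → g i j = 0

/-- The coadjoint orbit `N·f` of a linear form `f ∈ 𝔫*`. -/
def coadjOrbit (F : Type*) [Field F] (n : ℕ) (f : Module.Dual F (strictUpper F n)) :
    Set (Module.Dual F (strictUpper F n)) :=
  {f' | ∃ g g' : Matrix (Fin n) (Fin n) F, IsUnitriangular g ∧ IsUnitriangular g' ∧
    g * g' = 1 ∧ g' * g = 1 ∧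
    ∀ (x : strictUpper F n) (hx : g' * (x : Matrix (Fin n) (Fin n) F) * g ∈ strictUpper F n),
      f' x = f ⟨g' * (x : Matrix (Fin n) (Fin n) F) * g, hx⟩}

section Aux

variable {F : Type*} [Field F] {n : ℕ}

lemma commBracket_coe (x y : strictUpper F n) :
    (commBracket F n x y : Matrix (Fin n) (Fin n) F)
      = (x : Matrix (Fin n) (Fin n) F) * y - (y : Matrix (Fin n) (Fin n) F) * x := rfl

lemma commBracket_neg (x y : strictUpper F n) :
    commBracket F n x y = - commBracket F n y x := by
  apply Subtype.ext
  show (x : Matrix (Fin n) (Fin n) F) * y - (y : Matrix (Fin n) (Fin n) F) * x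
      = -((y : Matrix (Fin n) (Fin n) F) * x - (x : Matrix (Fin n) (Fin n) F) * y)
  rw [neg_sub]

lemma comm_Eelt (a k k' b : Fin n) (hak : a < k) (hkb : k' < b) (hab : a < b) :
    commBracket F n (Eelt F n a k hak) (Eelt F n k' b hkb)
      = if k = k' then Eelt F n a b hab else 0 := by
  rcases eq_or_ne k k' with rfl | hkk'
  · simp only [if_pos rfl]
    apply Subtype.ext
    show single a k 1 * single k b 1
        - single k b 1 * single a k 1 = single a b 1
    rw [Matrix.single_mul_single_same, Matrix.single_mul_single_of_ne (h := hab.ne'), mul_one,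
      sub_zero]
  · simp only [if_neg hkk']
    apply Subtype.ext
    show single a k 1 * single k' b 1
        - single k' b 1 * single a k 1 = 0
    rw [Matrix.single_mul_single_of_ne (h := hkk'), Matrix.single_mul_single_of_ne (h := hab.ne'),
      sub_zero]

lemma comm_Eelt_XX (a k k' : Fin n) (h1 : a < k) (h2 : a < k') :
    commBracket F n (Eelt F n a k h1) (Eelt F n a k' h2) = 0 := by
  apply Subtype.ext
  show single a k 1 * single a k' 1
      - single a k' 1 * single a k 1 = 0
  rw [Matrix.single_mul_single_of_ne (h := h1.ne'), Matrix.single_mul_single_of_ne (h := h2.ne'),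
    sub_zero]

lemma comm_Eelt_YY (k k' b : Fin n) (h1 : k < b) (h2 : k' < b) :
    commBracket F n (Eelt F n k b h1) (Eelt F n k' b h2) = 0 := by
  apply Subtype.ext
  show single k b 1 * single k' b 1
      - single k' b 1 * single k b 1 = 0
  rw [Matrix.single_mul_single_of_ne (h := h2.ne'), Matrix.single_mul_single_of_ne (h := h1.ne'),
    sub_zero]

end Aux

/-- If some pair of `Supp f` dominates `(i, j)`, then `rk B_f ≥ 2(j - i - 1)`. -/
theorem rkB_ge_of_dominated (F : Type*) [Field F] [IsAlgClosed F] [CharZero F]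
    (n : ℕ) (hn : 2 ≤ n) (f : Module.Dual F (strictUpper F n)) (i j : Fin n) (hij : i < j)
    (h : ∃ q ∈ Supp F n f, q.1 ≤ i ∧ j ≤ q.2) :
    2 * ((j : ℕ) - (i : ℕ) - 1) ≤ rkB F n f := by
  classical
  obtain ⟨⟨a, b⟩, ⟨hab, hfab⟩, hai, hjb⟩ := h
  simp only at hai hjb hfab
  set L := LinearMap.compr₂ (commBracket F n) f with hL
  have hab' : a < b := lt_of_le_of_lt hai (lt_of_lt_of_le hij hjb)
  set c := f (Eelt F n a b hab') with hc
  have hc0 : c ≠ 0 := hfab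
  set ι := ↥(Finset.Ioo i j) with hι
  have hXlt : ∀ k : ι, a < (k : Fin n) :=
    fun k => lt_of_le_of_lt hai (Finset.mem_Ioo.1 k.2).1
  have hYlt : ∀ k : ι, (k : Fin n) < b :=
    fun k => lt_of_lt_of_le (Finset.mem_Ioo.1 k.2).2 hjb
  set X : ι → strictUpper F n := fun k => Eelt F n a k (hXlt k) with hX
  set Y : ι → strictUpper F n := fun k => Eelt F n k b (hYlt k) with hY
  set v : ι ⊕ ι → Module.Dual F (strictUpper F n) :=
    fun s => Sum.elim (fun k => L (X k)) (fun k => L (Y k)) s with hv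
  have hvXY : ∀ k k' : ι, v (Sum.inl k) (Y k') = if k = k' then c else 0 := by
    intro k k'
    show f (commBracket F n (X k) (Y k')) = _
    rw [hX, hY, comm_Eelt a k k' b (hXlt k) (hYlt k') hab']
    split_ifs with h1 h2 h3
    · rfl
    · exact absurd (Subtype.ext h1) h2
    · exact absurd (congrArg Subtype.val h3) h1
    · exact map_zero f
  have hvXX : ∀ k k' : ι, v (Sum.inl k) (X k') = 0 := by
    intro k k'
    show f (commBracket F n (X k) (X k')) = _
    rw [hX, comm_Eelt_XX a k k' (hXlt k) (hXlt k'), map_zero]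
  have hvYY : ∀ k k' : ι, v (Sum.inr k) (Y k') = 0 := by
    intro k k'
    show f (commBracket F n (Y k) (Y k')) = _
    rw [hY, comm_Eelt_YY k k' b (hYlt k) (hYlt k'), map_zero]
  have hvYX : ∀ k k' : ι, v (Sum.inr k) (X k') = -(if k' = k then c else 0) := by
    intro k k'
    show f (commBracket F n (Y k) (X k')) = _
    rw [commBracket_neg, map_neg, neg_inj]
    have := hvXY k' k
    exact this
  have hli : LinearIndependent F v := by
    rw [Fintype.linearIndependent_iff]
    intro g hg
    have key : ∀ x : strictUpper F n, (∑ s, g s • v s) x = 0 := by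
      intro x; rw [hg]; rfl
    have hinl : ∀ k' : ι, g (Sum.inl k') = 0 := by
      intro k'
      have := key (Y k')
      rw [LinearMap.sum_apply] at this
      simp only [LinearMap.smul_apply, smul_eq_mul] at this
      rw [Fintype.sum_sum_type] at this
      simp only [hvXY, hvYY, mul_zero, mul_ite, Finset.sum_const_zero, add_zero,
        Finset.sum_ite_eq', Finset.mem_univ, if_true] at this
      rw [Finset.sum_ite_eq', if_pos (Finset.mem_univ _)] at this
      exact (mul_eq_zero.1 this).resolve_right hc0
    intro s
    rcases s with k' | k'
    · exact hinl k'
    · have := key (X k')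
      rw [LinearMap.sum_apply] at this
      simp only [LinearMap.smul_apply, smul_eq_mul] at this
      rw [Fintype.sum_sum_type] at this
      simp only [hvXX, hvYX, mul_zero, mul_neg, mul_ite, Finset.sum_const_zero, zero_add,
        Finset.sum_neg_distrib, Finset.sum_ite_eq, Finset.mem_univ, if_true,
        neg_eq_zero] at this
      rw [Finset.sum_ite_eq, if_pos (Finset.mem_univ _)] at this
      exact (mul_eq_zero.1 this).resolve_right hc0
  have hmem : ∀ s, v s ∈ LinearMap.range L := by
    rintro (k | k)
    · exact ⟨X k, rfl⟩
    · exact ⟨Y k, rfl⟩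
  have hspan : Submodule.span F (Set.range v) ≤ LinearMap.range L :=
    Submodule.span_le.2 (Set.range_subset_iff.2 hmem)
  have hcard : Fintype.card (ι ⊕ ι) = 2 * ((j : ℕ) - (i : ℕ) - 1) := by
    rw [Fintype.card_sum, Fintype.card_coe, Fin.card_Ioo, two_mul]
  calc 2 * ((j : ℕ) - (i : ℕ) - 1)
      = Module.finrank F (Submodule.span F (Set.range v)) := by
        rw [finrank_span_eq_card hli, hcard]
    _ ≤ Module.finrank F (LinearMap.range L) := Submodule.finrank_mono hspan
end

section
/- Let n = 4. Every coadjoint N-orbit Ω ⊆ 𝔫* such that rk B_f = 2 and (1,3), (2,4) ∈ NSupp(f) (for some, equivalently every, f ∈ Ω) contains exactly one linear form h with Supp(h) = {(1,2), (1,3), (2,4)} or Supp(h) = {(1,3), (2,4)}; conversely, every h ∈ 𝔫* with Supp(h) equal to one of these two sets satisfies rk B_h = 2 and (1,3), (2,4) ∈ NSupp(h). -/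
open Matrix

/-- `NSupp f = ⋃_{f' ∈ N·f} Supp f'`. -/
def NSupp (F : Type*) [Field F] (n : ℕ) (f : Module.Dual F (strictUpper F n)) :
    Set (Fin n × Fin n) :=
  {p | ∃ f' ∈ coadjOrbit F n f, p ∈ Supp F n f'}

section Aux
variable {F : Type*} [Field F]

namespace OrbitAux

def E01 (F : Type*) [Field F] : strictUpper F 4 := Eelt F 4 0 1 (by decide)
def E02 (F : Type*) [Field F] : strictUpper F 4 := Eelt F 4 0 2 (by decide)
def E03 (F : Type*) [Field F] : strictUpper F 4 := Eelt F 4 0 3 (by decide)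
def E12 (F : Type*) [Field F] : strictUpper F 4 := Eelt F 4 1 2 (by decide)
def E13 (F : Type*) [Field F] : strictUpper F 4 := Eelt F 4 1 3 (by decide)
def E23 (F : Type*) [Field F] : strictUpper F 4 := Eelt F 4 2 3 (by decide)

lemma decomp (x : strictUpper F 4) :
    x = x.1 0 1 • E01 F + x.1 0 2 • E02 F + x.1 0 3 • E03 F
      + x.1 1 2 • E12 F + x.1 1 3 • E13 F + x.1 2 3 • E23 F := by
  apply Subtype.ext
  ext i j
  simp only [Submodule.coe_add, SetLike.val_smul, Matrix.add_apply, Matrix.smul_apply,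
    E01, E02, E03, E12, E13, E23, Eelt, Matrix.single, Matrix.of_apply, smul_eq_mul]
  fin_cases i <;> fin_cases j <;>
    simp <;>
    first
      | rfl
      | (refine x.2 _ _ ?_; decide)

lemma dual_apply (f : Module.Dual F (strictUpper F 4)) (x : strictUpper F 4) :
    f x = x.1 0 1 * f (E01 F) + x.1 0 2 * f (E02 F) + x.1 0 3 * f (E03 F)
      + x.1 1 2 * f (E12 F) + x.1 1 3 * f (E13 F) + x.1 2 3 * f (E23 F) := by
  conv_lhs => rw [decomp x]
  simp [map_add, _root_.map_smul]

lemma dual_ext {f g : Module.Dual F (strictUpper F 4)}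
    (h1 : f (E01 F) = g (E01 F)) (h2 : f (E02 F) = g (E02 F)) (h3 : f (E03 F) = g (E03 F))
    (h4 : f (E12 F) = g (E12 F)) (h5 : f (E13 F) = g (E13 F)) (h6 : f (E23 F) = g (E23 F)) :
    f = g := by
  apply LinearMap.ext
  intro x
  rw [dual_apply f x, dual_apply g x, h1, h2, h3, h4, h5, h6]


lemma br_01_01 : commBracket F 4 (E01 F) (E01 F) = 0 := by
  apply Subtype.ext
  show (Matrix.single 0 1 (1:F)) * Matrix.single 0 1 1
      - Matrix.single 0 1 1 * Matrix.single 0 1 1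
      = 0
  simp

lemma br_01_02 : commBracket F 4 (E01 F) (E02 F) = 0 := by
  apply Subtype.ext
  show (Matrix.single 0 1 (1:F)) * Matrix.single 0 2 1
      - Matrix.single 0 2 1 * Matrix.single 0 1 1
      = 0
  simp

lemma br_01_03 : commBracket F 4 (E01 F) (E03 F) = 0 := by
  apply Subtype.ext
  show (Matrix.single 0 1 (1:F)) * Matrix.single 0 3 1
      - Matrix.single 0 3 1 * Matrix.single 0 1 1
      = 0
  simp

lemma br_01_12 : commBracket F 4 (E01 F) (E12 F) = E02 F := by
  apply Subtype.ext
  show (Matrix.single 0 1 (1:F)) * Matrix.single 1 2 1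
      - Matrix.single 1 2 1 * Matrix.single 0 1 1
      = Matrix.single 0 2 1
  simp

lemma br_01_13 : commBracket F 4 (E01 F) (E13 F) = E03 F := by
  apply Subtype.ext
  show (Matrix.single 0 1 (1:F)) * Matrix.single 1 3 1
      - Matrix.single 1 3 1 * Matrix.single 0 1 1
      = Matrix.single 0 3 1
  simp

lemma br_01_23 : commBracket F 4 (E01 F) (E23 F) = 0 := by
  apply Subtype.ext
  show (Matrix.single 0 1 (1:F)) * Matrix.single 2 3 1
      - Matrix.single 2 3 1 * Matrix.single 0 1 1
      = 0
  simp

lemma br_02_01 : commBracket F 4 (E02 F) (E01 F) = 0 := by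
  apply Subtype.ext
  show (Matrix.single 0 2 (1:F)) * Matrix.single 0 1 1
      - Matrix.single 0 1 1 * Matrix.single 0 2 1
      = 0
  simp

lemma br_02_02 : commBracket F 4 (E02 F) (E02 F) = 0 := by
  apply Subtype.ext
  show (Matrix.single 0 2 (1:F)) * Matrix.single 0 2 1
      - Matrix.single 0 2 1 * Matrix.single 0 2 1
      = 0
  simp

lemma br_02_03 : commBracket F 4 (E02 F) (E03 F) = 0 := by
  apply Subtype.ext
  show (Matrix.single 0 2 (1:F)) * Matrix.single 0 3 1
      - Matrix.single 0 3 1 * Matrix.single 0 2 1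
      = 0
  simp

lemma br_02_12 : commBracket F 4 (E02 F) (E12 F) = 0 := by
  apply Subtype.ext
  show (Matrix.single 0 2 (1:F)) * Matrix.single 1 2 1
      - Matrix.single 1 2 1 * Matrix.single 0 2 1
      = 0
  simp

lemma br_02_13 : commBracket F 4 (E02 F) (E13 F) = 0 := by
  apply Subtype.ext
  show (Matrix.single 0 2 (1:F)) * Matrix.single 1 3 1
      - Matrix.single 1 3 1 * Matrix.single 0 2 1
      = 0
  simp

lemma br_02_23 : commBracket F 4 (E02 F) (E23 F) = E03 F := by
  apply Subtype.ext
  show (Matrix.single 0 2 (1:F)) * Matrix.single 2 3 1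
      - Matrix.single 2 3 1 * Matrix.single 0 2 1
      = Matrix.single 0 3 1
  simp

lemma br_03_01 : commBracket F 4 (E03 F) (E01 F) = 0 := by
  apply Subtype.ext
  show (Matrix.single 0 3 (1:F)) * Matrix.single 0 1 1
      - Matrix.single 0 1 1 * Matrix.single 0 3 1
      = 0
  simp

lemma br_03_02 : commBracket F 4 (E03 F) (E02 F) = 0 := by
  apply Subtype.ext
  show (Matrix.single 0 3 (1:F)) * Matrix.single 0 2 1
      - Matrix.single 0 2 1 * Matrix.single 0 3 1
      = 0
  simp

lemma br_03_03 : commBracket F 4 (E03 F) (E03 F) = 0 := by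
  apply Subtype.ext
  show (Matrix.single 0 3 (1:F)) * Matrix.single 0 3 1
      - Matrix.single 0 3 1 * Matrix.single 0 3 1
      = 0
  simp

lemma br_03_12 : commBracket F 4 (E03 F) (E12 F) = 0 := by
  apply Subtype.ext
  show (Matrix.single 0 3 (1:F)) * Matrix.single 1 2 1
      - Matrix.single 1 2 1 * Matrix.single 0 3 1
      = 0
  simp

lemma br_03_13 : commBracket F 4 (E03 F) (E13 F) = 0 := by
  apply Subtype.ext
  show (Matrix.single 0 3 (1:F)) * Matrix.single 1 3 1
      - Matrix.single 1 3 1 * Matrix.single 0 3 1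
      = 0
  simp

lemma br_03_23 : commBracket F 4 (E03 F) (E23 F) = 0 := by
  apply Subtype.ext
  show (Matrix.single 0 3 (1:F)) * Matrix.single 2 3 1
      - Matrix.single 2 3 1 * Matrix.single 0 3 1
      = 0
  simp

lemma br_12_01 : commBracket F 4 (E12 F) (E01 F) = -E02 F := by
  apply Subtype.ext
  show (Matrix.single 1 2 (1:F)) * Matrix.single 0 1 1
      - Matrix.single 0 1 1 * Matrix.single 1 2 1
      = -Matrix.single 0 2 1
  simp

lemma br_12_02 : commBracket F 4 (E12 F) (E02 F) = 0 := by
  apply Subtype.ext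
  show (Matrix.single 1 2 (1:F)) * Matrix.single 0 2 1
      - Matrix.single 0 2 1 * Matrix.single 1 2 1
      = 0
  simp

lemma br_12_03 : commBracket F 4 (E12 F) (E03 F) = 0 := by
  apply Subtype.ext
  show (Matrix.single 1 2 (1:F)) * Matrix.single 0 3 1
      - Matrix.single 0 3 1 * Matrix.single 1 2 1
      = 0
  simp

lemma br_12_12 : commBracket F 4 (E12 F) (E12 F) = 0 := by
  apply Subtype.ext
  show (Matrix.single 1 2 (1:F)) * Matrix.single 1 2 1
      - Matrix.single 1 2 1 * Matrix.single 1 2 1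
      = 0
  simp

lemma br_12_13 : commBracket F 4 (E12 F) (E13 F) = 0 := by
  apply Subtype.ext
  show (Matrix.single 1 2 (1:F)) * Matrix.single 1 3 1
      - Matrix.single 1 3 1 * Matrix.single 1 2 1
      = 0
  simp

lemma br_12_23 : commBracket F 4 (E12 F) (E23 F) = E13 F := by
  apply Subtype.ext
  show (Matrix.single 1 2 (1:F)) * Matrix.single 2 3 1
      - Matrix.single 2 3 1 * Matrix.single 1 2 1
      = Matrix.single 1 3 1
  simp

lemma br_13_01 : commBracket F 4 (E13 F) (E01 F) = -E03 F := by
  apply Subtype.ext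
  show (Matrix.single 1 3 (1:F)) * Matrix.single 0 1 1
      - Matrix.single 0 1 1 * Matrix.single 1 3 1
      = -Matrix.single 0 3 1
  simp

lemma br_13_02 : commBracket F 4 (E13 F) (E02 F) = 0 := by
  apply Subtype.ext
  show (Matrix.single 1 3 (1:F)) * Matrix.single 0 2 1
      - Matrix.single 0 2 1 * Matrix.single 1 3 1
      = 0
  simp

lemma br_13_03 : commBracket F 4 (E13 F) (E03 F) = 0 := by
  apply Subtype.ext
  show (Matrix.single 1 3 (1:F)) * Matrix.single 0 3 1
      - Matrix.single 0 3 1 * Matrix.single 1 3 1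
      = 0
  simp

lemma br_13_12 : commBracket F 4 (E13 F) (E12 F) = 0 := by
  apply Subtype.ext
  show (Matrix.single 1 3 (1:F)) * Matrix.single 1 2 1
      - Matrix.single 1 2 1 * Matrix.single 1 3 1
      = 0
  simp

lemma br_13_13 : commBracket F 4 (E13 F) (E13 F) = 0 := by
  apply Subtype.ext
  show (Matrix.single 1 3 (1:F)) * Matrix.single 1 3 1
      - Matrix.single 1 3 1 * Matrix.single 1 3 1
      = 0
  simp

lemma br_13_23 : commBracket F 4 (E13 F) (E23 F) = 0 := by
  apply Subtype.ext
  show (Matrix.single 1 3 (1:F)) * Matrix.single 2 3 1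
      - Matrix.single 2 3 1 * Matrix.single 1 3 1
      = 0
  simp

lemma br_23_01 : commBracket F 4 (E23 F) (E01 F) = 0 := by
  apply Subtype.ext
  show (Matrix.single 2 3 (1:F)) * Matrix.single 0 1 1
      - Matrix.single 0 1 1 * Matrix.single 2 3 1
      = 0
  simp

lemma br_23_02 : commBracket F 4 (E23 F) (E02 F) = -E03 F := by
  apply Subtype.ext
  show (Matrix.single 2 3 (1:F)) * Matrix.single 0 2 1
      - Matrix.single 0 2 1 * Matrix.single 2 3 1
      = -Matrix.single 0 3 1
  simp

lemma br_23_03 : commBracket F 4 (E23 F) (E03 F) = 0 := by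
  apply Subtype.ext
  show (Matrix.single 2 3 (1:F)) * Matrix.single 0 3 1
      - Matrix.single 0 3 1 * Matrix.single 2 3 1
      = 0
  simp

lemma br_23_12 : commBracket F 4 (E23 F) (E12 F) = -E13 F := by
  apply Subtype.ext
  show (Matrix.single 2 3 (1:F)) * Matrix.single 1 2 1
      - Matrix.single 1 2 1 * Matrix.single 2 3 1
      = -Matrix.single 1 3 1
  simp

lemma br_23_13 : commBracket F 4 (E23 F) (E13 F) = 0 := by
  apply Subtype.ext
  show (Matrix.single 2 3 (1:F)) * Matrix.single 1 3 1
      - Matrix.single 1 3 1 * Matrix.single 2 3 1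
      = 0
  simp

lemma br_23_23 : commBracket F 4 (E23 F) (E23 F) = 0 := by
  apply Subtype.ext
  show (Matrix.single 2 3 (1:F)) * Matrix.single 2 3 1
      - Matrix.single 2 3 1 * Matrix.single 2 3 1
      = 0
  simp

lemma range_L_eq {M : Type*} [AddCommGroup M] [Module F M] (L : strictUpper F 4 →ₗ[F] M) :
    LinearMap.range L = Submodule.span F
      {L (E01 F), L (E02 F), L (E03 F), L (E12 F), L (E13 F), L (E23 F)} := by
  refine le_antisymm ?_ (Submodule.span_le.mpr ?_)
  · rintro _ ⟨x, rfl⟩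
    rw [decomp x]
    simp only [map_add, _root_.map_smul]
    have m1 : L (E01 F) ∈ Submodule.span F
        {L (E01 F), L (E02 F), L (E03 F), L (E12 F), L (E13 F), L (E23 F)} :=
      Submodule.subset_span (by simp)
    have m2 : L (E02 F) ∈ Submodule.span F
        {L (E01 F), L (E02 F), L (E03 F), L (E12 F), L (E13 F), L (E23 F)} :=
      Submodule.subset_span (by simp)
    have m3 : L (E03 F) ∈ Submodule.span F
        {L (E01 F), L (E02 F), L (E03 F), L (E12 F), L (E13 F), L (E23 F)} :=
      Submodule.subset_span (by simp)
    have m4 : L (E12 F) ∈ Submodule.span F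
        {L (E01 F), L (E02 F), L (E03 F), L (E12 F), L (E13 F), L (E23 F)} :=
      Submodule.subset_span (by simp)
    have m5 : L (E13 F) ∈ Submodule.span F
        {L (E01 F), L (E02 F), L (E03 F), L (E12 F), L (E13 F), L (E23 F)} :=
      Submodule.subset_span (by simp)
    have m6 : L (E23 F) ∈ Submodule.span F
        {L (E01 F), L (E02 F), L (E03 F), L (E12 F), L (E13 F), L (E23 F)} :=
      Submodule.subset_span (by simp)
    exact add_mem (add_mem (add_mem (add_mem (add_mem
      (Submodule.smul_mem _ _ m1) (Submodule.smul_mem _ _ m2)) (Submodule.smul_mem _ _ m3))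
      (Submodule.smul_mem _ _ m4)) (Submodule.smul_mem _ _ m5)) (Submodule.smul_mem _ _ m6)
  · intro y hy
    simp only [Set.mem_insert_iff, Set.mem_singleton_iff] at hy
    rcases hy with rfl | rfl | rfl | rfl | rfl | rfl <;> exact LinearMap.mem_range_self _ _


lemma rank_ge_three {f : Module.Dual F (strictUpper F 4)} (hf : f (E03 F) ≠ 0) :
    3 ≤ rkB F 4 f := by
  set L := LinearMap.compr₂ (commBracket F 4) f with hL
  have hv : LinearIndependent F ![L (E02 F), L (E13 F), L (E23 F)] := by
    rw [Fintype.linearIndependent_iff]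
    intro g hg
    have h1 := DFunLike.congr_fun hg (E23 F)
    have h2 := DFunLike.congr_fun hg (E01 F)
    have h3 := DFunLike.congr_fun hg (E02 F)
    simp only [Fin.sum_univ_three, Matrix.cons_val_zero, Matrix.cons_val_one, Matrix.head_cons,
      Matrix.cons_val_two, Matrix.tail_cons,
      LinearMap.add_apply, LinearMap.smul_apply, LinearMap.zero_apply, smul_eq_mul, hL,
      LinearMap.compr₂_apply, br_02_23, br_13_23, br_23_23, br_02_01, br_13_01, br_23_01,
      br_02_02, br_13_02, br_23_02, map_zero, map_neg, mul_zero, add_zero, zero_add,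
      mul_neg, neg_eq_zero] at h1 h2 h3
    have g0 : g 0 = 0 := by
      rcases mul_eq_zero.mp h1 with h | h
      · exact h
      · exact absurd h hf
    have g1 : g 1 = 0 := by
      rcases mul_eq_zero.mp h2 with h | h
      · exact h
      · exact absurd h hf
    have g2 : g 2 = 0 := by
      rcases mul_eq_zero.mp h3 with h | h
      · exact h
      · exact absurd h hf
    intro i
    fin_cases i <;> assumption
  have hsub : Submodule.span F (Set.range ![L (E02 F), L (E13 F), L (E23 F)])
      ≤ LinearMap.range L := by
    rw [Submodule.span_le]
    rintro y ⟨i, rfl⟩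
    fin_cases i <;> exact LinearMap.mem_range_self _ _
  have hcard := finrank_span_eq_card hv
  calc (3 : ℕ) = Module.finrank F
        (Submodule.span F (Set.range ![L (E02 F), L (E13 F), L (E23 F)])) := by
        rw [hcard]; simp
    _ ≤ Module.finrank F (LinearMap.range L) := Submodule.finrank_mono hsub
    _ = rkB F 4 f := rfl

lemma rank_eq_two {f : Module.Dual F (strictUpper F 4)} (h03 : f (E03 F) = 0)
    (h02 : f (E02 F) ≠ 0) : rkB F 4 f = 2 := by
  set L := LinearMap.compr₂ (commBracket F 4) f with hL
  have hz2 : L (E02 F) = 0 := by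
    apply dual_ext <;>
      simp [hL, LinearMap.compr₂_apply, br_02_01, br_02_02, br_02_03, br_02_12, br_02_13,
        br_02_23, h03]
  have hz3 : L (E03 F) = 0 := by
    apply dual_ext <;>
      simp [hL, LinearMap.compr₂_apply, br_03_01, br_03_02, br_03_03, br_03_12, br_03_13,
        br_03_23, h03]
  have hz5 : L (E13 F) = 0 := by
    apply dual_ext <;>
      simp [hL, LinearMap.compr₂_apply, br_13_01, br_13_02, br_13_03, br_13_12, br_13_13,
        br_13_23, h03]
  have h23 : L (E23 F) = (-(f (E13 F)) / f (E02 F)) • L (E01 F) := by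
    apply dual_ext <;>
      simp [hL, LinearMap.compr₂_apply, br_23_01, br_23_02, br_23_03, br_23_12, br_23_13,
        br_23_23, br_01_01, br_01_02, br_01_03, br_01_12, br_01_13, br_01_23, h03] <;>
      field_simp
  have hspan : LinearMap.range L = Submodule.span F {L (E01 F), L (E12 F)} := by
    rw [range_L_eq L, hz2, hz3, hz5, h23]
    apply le_antisymm
    · rw [Submodule.span_le]
      intro y hy
      simp only [Set.mem_insert_iff, Set.mem_singleton_iff] at hy
      rcases hy with rfl | rfl | rfl | rfl | rfl | rfl
      · exact Submodule.subset_span (by simp)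
      · exact Submodule.zero_mem _
      · exact Submodule.zero_mem _
      · exact Submodule.subset_span (by simp)
      · exact Submodule.zero_mem _
      · exact Submodule.smul_mem _ _ (Submodule.subset_span (by simp))
    · rw [Submodule.span_le]
      intro y hy
      simp only [Set.mem_insert_iff, Set.mem_singleton_iff] at hy
      rcases hy with rfl | rfl
      · exact Submodule.subset_span (by simp)
      · exact Submodule.subset_span (by simp)
  have hv : LinearIndependent F ![L (E01 F), L (E12 F)] := by
    rw [Fintype.linearIndependent_iff]
    intro g hg
    have h1 := DFunLike.congr_fun hg (E12 F)
    have h2 := DFunLike.congr_fun hg (E01 F)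
    simp only [Fin.sum_univ_two, Matrix.cons_val_zero, Matrix.cons_val_one, Matrix.head_cons,
      LinearMap.add_apply, LinearMap.smul_apply, LinearMap.zero_apply, smul_eq_mul, hL,
      LinearMap.compr₂_apply, br_01_12, br_12_12, br_01_01, br_12_01, map_zero, map_neg,
      mul_zero, add_zero, zero_add, mul_neg, neg_eq_zero] at h1 h2
    have g0 : g 0 = 0 := by
      rcases mul_eq_zero.mp h1 with h | h
      · exact h
      · exact absurd h h02
    have g1 : g 1 = 0 := by
      rcases mul_eq_zero.mp h2 with h | h
      · exact h
      · exact absurd h h02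
    intro i
    fin_cases i <;> assumption
  have hr : Set.range ![L (E01 F), L (E12 F)] = {L (E01 F), L (E12 F)} := by
    ext z
    simp [Fin.exists_fin_two]
    tauto
  have hcard := finrank_span_eq_card hv
  rw [hr] at hcard
  rw [rkB, ← hL, hspan, hcard]
  simp

lemma unitriangular_mul_mem {n : ℕ} {g x : Matrix (Fin n) (Fin n) F}
    (hg : IsUnitriangular g) (hx : x ∈ strictUpper F n) : g * x ∈ strictUpper F n := by
  intro i j hji
  rw [Matrix.mul_apply]
  refine Finset.sum_eq_zero fun k _ => ?_
  rcases lt_or_ge k i with h | h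
  · rw [hg.2 i k h, zero_mul]
  · rw [hx k j (hji.trans h), mul_zero]

lemma mul_unitriangular_mem {n : ℕ} {g x : Matrix (Fin n) (Fin n) F}
    (hg : IsUnitriangular g) (hx : x ∈ strictUpper F n) : x * g ∈ strictUpper F n := by
  intro i j hji
  rw [Matrix.mul_apply]
  refine Finset.sum_eq_zero fun k _ => ?_
  rcases le_or_gt k i with h | h
  · rw [hx i k h, zero_mul]
  · rw [hg.2 k j (hji.trans_lt h), mul_zero]

lemma conj_mem {n : ℕ} {g g' : Matrix (Fin n) (Fin n) F} (hg : IsUnitriangular g)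
    (hg' : IsUnitriangular g') (x : strictUpper F n) :
    g' * (x : Matrix (Fin n) (Fin n) F) * g ∈ strictUpper F n :=
  mul_unitriangular_mem hg (unitriangular_mul_mem hg' x.2)

/-- conjugation as a linear map on `𝔫`. -/
def conjMap {n : ℕ} (g g' : Matrix (Fin n) (Fin n) F) (hg : IsUnitriangular g)
    (hg' : IsUnitriangular g') : strictUpper F n →ₗ[F] strictUpper F n where
  toFun x := ⟨g' * (x : Matrix (Fin n) (Fin n) F) * g, conj_mem hg hg' x⟩
  map_add' x y := by
    apply Subtype.ext
    show g' * ((x : Matrix (Fin n) (Fin n) F) + y) * g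
        = g' * (x : Matrix (Fin n) (Fin n) F) * g + g' * (y : Matrix (Fin n) (Fin n) F) * g
    noncomm_ring
  map_smul' c x := by
    apply Subtype.ext
    show g' * (c • (x : Matrix (Fin n) (Fin n) F)) * g
        = c • (g' * (x : Matrix (Fin n) (Fin n) F) * g)
    rw [Matrix.mul_smul, Matrix.smul_mul]

lemma mem_orbit_of {n : ℕ} {g g' : Matrix (Fin n) (Fin n) F} (hg : IsUnitriangular g)
    (hg' : IsUnitriangular g') (h1 : g * g' = 1) (h2 : g' * g = 1)
    (f : Module.Dual F (strictUpper F n)) :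
    (f ∘ₗ conjMap g g' hg hg') ∈ coadjOrbit F n f :=
  ⟨g, g', hg, hg', h1, h2, fun x hx => rfl⟩

lemma one_unitriangular {n : ℕ} : IsUnitriangular (1 : Matrix (Fin n) (Fin n) F) :=
  ⟨fun i => Matrix.one_apply_eq i, fun i j h => Matrix.one_apply_ne (ne_of_gt h)⟩

lemma self_mem_orbit {n : ℕ} (f : Module.Dual F (strictUpper F n)) :
    f ∈ coadjOrbit F n f := by
  refine ⟨1, 1, one_unitriangular, one_unitriangular, one_mul 1, one_mul 1, fun x hx => ?_⟩
  congr 1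
  apply Subtype.ext
  show (x : Matrix (Fin n) (Fin n) F) = 1 * (x : Matrix (Fin n) (Fin n) F) * 1
  rw [one_mul, mul_one]

lemma orbit_vals {f f' : Module.Dual F (strictUpper F 4)} (h : f' ∈ coadjOrbit F 4 f) :
    f' (E03 F) = f (E03 F) ∧
    (f (E03 F) = 0 →
      f' (E02 F) = f (E02 F) ∧ f' (E13 F) = f (E13 F) ∧
      f (E13 F) * f' (E01 F) + f (E02 F) * f' (E23 F)
        = f (E13 F) * f (E01 F) + f (E02 F) * f (E23 F)) := by
  obtain ⟨g, g', hg, hg', hgg', hg'g, hf'⟩ := h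
  have a10 : g 1 0 = 0 := hg.2 1 0 (by decide)
  have a20 : g 2 0 = 0 := hg.2 2 0 (by decide)
  have a21 : g 2 1 = 0 := hg.2 2 1 (by decide)
  have a30 : g 3 0 = 0 := hg.2 3 0 (by decide)
  have a31 : g 3 1 = 0 := hg.2 3 1 (by decide)
  have a32 : g 3 2 = 0 := hg.2 3 2 (by decide)
  have b10 : g' 1 0 = 0 := hg'.2 1 0 (by decide)
  have b20 : g' 2 0 = 0 := hg'.2 2 0 (by decide)
  have b21 : g' 2 1 = 0 := hg'.2 2 1 (by decide)
  have b30 : g' 3 0 = 0 := hg'.2 3 0 (by decide)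
  have b31 : g' 3 1 = 0 := hg'.2 3 1 (by decide)
  have b32 : g' 3 2 = 0 := hg'.2 3 2 (by decide)
  have v01 : f' (E01 F) = f (E01 F) + g 1 2 * f (E02 F) + g 1 3 * f (E03 F) := by
    rw [hf' (E01 F) (conj_mem hg hg' _), dual_apply f]
    simp [E01, E02, E03, E12, E13, E23, Eelt, Matrix.mul_apply, Fin.sum_univ_four,
      Matrix.single, Matrix.of_apply,
      hg.1, hg'.1, a10, a20, a21, a30, a31, a32, b10, b20, b21, b30, b31, b32]
  have v02 : f' (E02 F) = f (E02 F) + g 2 3 * f (E03 F) := by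
    rw [hf' (E02 F) (conj_mem hg hg' _), dual_apply f]
    simp [E01, E02, E03, E12, E13, E23, Eelt, Matrix.mul_apply, Fin.sum_univ_four,
      Matrix.single, Matrix.of_apply,
      hg.1, hg'.1, a10, a20, a21, a30, a31, a32, b10, b20, b21, b30, b31, b32]
  have v03 : f' (E03 F) = f (E03 F) := by
    rw [hf' (E03 F) (conj_mem hg hg' _), dual_apply f]
    simp [E01, E02, E03, E12, E13, E23, Eelt, Matrix.mul_apply, Fin.sum_univ_four,
      Matrix.single, Matrix.of_apply,
      hg.1, hg'.1, a10, a20, a21, a30, a31, a32, b10, b20, b21, b30, b31, b32]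
  have v13 : f' (E13 F) = f (E13 F) + g' 0 1 * f (E03 F) := by
    rw [hf' (E13 F) (conj_mem hg hg' _), dual_apply f]
    simp [E01, E02, E03, E12, E13, E23, Eelt, Matrix.mul_apply, Fin.sum_univ_four,
      Matrix.single, Matrix.of_apply,
      hg.1, hg'.1, a10, a20, a21, a30, a31, a32, b10, b20, b21, b30, b31, b32]
    ring
  have v23 : f' (E23 F) = f (E23 F) + g' 1 2 * f (E13 F) + g' 0 2 * f (E03 F) := by
    rw [hf' (E23 F) (conj_mem hg hg' _), dual_apply f]
    simp [E01, E02, E03, E12, E13, E23, Eelt, Matrix.mul_apply, Fin.sum_univ_four,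
      Matrix.single, Matrix.of_apply,
      hg.1, hg'.1, a10, a20, a21, a30, a31, a32, b10, b20, b21, b30, b31, b32]
    ring
  have h12' : g 1 2 + g' 1 2 = 0 := by
    have e : (g * g') 1 2 = (1 : Matrix (Fin 4) (Fin 4) F) 1 2 := by rw [hgg']
    simp [Matrix.mul_apply, Fin.sum_univ_four, Matrix.one_apply,
      hg.1, hg'.1, a10, a20, a21, a30, a31, a32, b10, b20, b21, b30, b31, b32] at e
    linear_combination e
  refine ⟨v03, fun h03 => ⟨?_, ?_, ?_⟩⟩
  · rw [v02, h03, mul_zero, add_zero]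
  · rw [v13, h03, mul_zero, add_zero]
  · rw [v01, v23, h03]
    linear_combination (f (E02 F) * f (E13 F)) * h12'


lemma supp_S1 {φ : Module.Dual F (strictUpper F 4)}
    (h1 : φ (E01 F) ≠ 0) (h2 : φ (E02 F) ≠ 0) (h3 : φ (E03 F) = 0)
    (h4 : φ (E12 F) = 0) (h5 : φ (E13 F) ≠ 0) (h6 : φ (E23 F) = 0) :
    Supp F 4 φ = {((0 : Fin 4), (1 : Fin 4)), ((0 : Fin 4), (2 : Fin 4)), ((1 : Fin 4), (3 : Fin 4))} := by
  simp only [E01, E02, E03, E12, E13, E23] at h1 h2 h3 h4 h5 h6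
  ext ⟨i, j⟩
  simp only [Supp, Set.mem_setOf_eq, Set.mem_insert_iff, Set.mem_singleton_iff, Prod.mk.injEq]
  fin_cases i <;> fin_cases j
  · constructor
    · rintro ⟨hlt, -⟩
      exact absurd hlt (by decide)
    · intro hc
      exfalso
      revert hc
      decide
  · exact ⟨fun _ => by decide, fun _ => ⟨by decide, h1⟩⟩
  · exact ⟨fun _ => by decide, fun _ => ⟨by decide, h2⟩⟩
  · constructor
    · rintro ⟨hlt, hv⟩
      exact absurd h3 hv
    · intro hc
      exfalso
      revert hc
      decide
  · constructor
    · rintro ⟨hlt, -⟩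
      exact absurd hlt (by decide)
    · intro hc
      exfalso
      revert hc
      decide
  · constructor
    · rintro ⟨hlt, -⟩
      exact absurd hlt (by decide)
    · intro hc
      exfalso
      revert hc
      decide
  · constructor
    · rintro ⟨hlt, hv⟩
      exact absurd h4 hv
    · intro hc
      exfalso
      revert hc
      decide
  · exact ⟨fun _ => by decide, fun _ => ⟨by decide, h5⟩⟩
  · constructor
    · rintro ⟨hlt, -⟩
      exact absurd hlt (by decide)
    · intro hc
      exfalso
      revert hc
      decide
  · constructor
    · rintro ⟨hlt, -⟩
      exact absurd hlt (by decide)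
    · intro hc
      exfalso
      revert hc
      decide
  · constructor
    · rintro ⟨hlt, -⟩
      exact absurd hlt (by decide)
    · intro hc
      exfalso
      revert hc
      decide
  · constructor
    · rintro ⟨hlt, hv⟩
      exact absurd h6 hv
    · intro hc
      exfalso
      revert hc
      decide
  · constructor
    · rintro ⟨hlt, -⟩
      exact absurd hlt (by decide)
    · intro hc
      exfalso
      revert hc
      decide
  · constructor
    · rintro ⟨hlt, -⟩
      exact absurd hlt (by decide)
    · intro hc
      exfalso
      revert hc
      decide
  · constructor
    · rintro ⟨hlt, -⟩
      exact absurd hlt (by decide)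
    · intro hc
      exfalso
      revert hc
      decide
  · constructor
    · rintro ⟨hlt, -⟩
      exact absurd hlt (by decide)
    · intro hc
      exfalso
      revert hc
      decide

lemma supp_S2 {φ : Module.Dual F (strictUpper F 4)}
    (h1 : φ (E01 F) = 0) (h2 : φ (E02 F) ≠ 0) (h3 : φ (E03 F) = 0)
    (h4 : φ (E12 F) = 0) (h5 : φ (E13 F) ≠ 0) (h6 : φ (E23 F) = 0) :
    Supp F 4 φ = {((0 : Fin 4), (2 : Fin 4)), ((1 : Fin 4), (3 : Fin 4))} := by
  simp only [E01, E02, E03, E12, E13, E23] at h1 h2 h3 h4 h5 h6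
  ext ⟨i, j⟩
  simp only [Supp, Set.mem_setOf_eq, Set.mem_insert_iff, Set.mem_singleton_iff, Prod.mk.injEq]
  fin_cases i <;> fin_cases j
  · constructor
    · rintro ⟨hlt, -⟩
      exact absurd hlt (by decide)
    · intro hc
      exfalso
      revert hc
      decide
  · constructor
    · rintro ⟨hlt, hv⟩
      exact absurd h1 hv
    · intro hc
      exfalso
      revert hc
      decide
  · exact ⟨fun _ => by decide, fun _ => ⟨by decide, h2⟩⟩
  · constructor
    · rintro ⟨hlt, hv⟩
      exact absurd h3 hv
    · intro hc
      exfalso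
      revert hc
      decide
  · constructor
    · rintro ⟨hlt, -⟩
      exact absurd hlt (by decide)
    · intro hc
      exfalso
      revert hc
      decide
  · constructor
    · rintro ⟨hlt, -⟩
      exact absurd hlt (by decide)
    · intro hc
      exfalso
      revert hc
      decide
  · constructor
    · rintro ⟨hlt, hv⟩
      exact absurd h4 hv
    · intro hc
      exfalso
      revert hc
      decide
  · exact ⟨fun _ => by decide, fun _ => ⟨by decide, h5⟩⟩
  · constructor
    · rintro ⟨hlt, -⟩
      exact absurd hlt (by decide)
    · intro hc
      exfalso
      revert hc
      decide
  · constructor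
    · rintro ⟨hlt, -⟩
      exact absurd hlt (by decide)
    · intro hc
      exfalso
      revert hc
      decide
  · constructor
    · rintro ⟨hlt, -⟩
      exact absurd hlt (by decide)
    · intro hc
      exfalso
      revert hc
      decide
  · constructor
    · rintro ⟨hlt, hv⟩
      exact absurd h6 hv
    · intro hc
      exfalso
      revert hc
      decide
  · constructor
    · rintro ⟨hlt, -⟩
      exact absurd hlt (by decide)
    · intro hc
      exfalso
      revert hc
      decide
  · constructor
    · rintro ⟨hlt, -⟩
      exact absurd hlt (by decide)
    · intro hc
      exfalso
      revert hc
      decide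
  · constructor
    · rintro ⟨hlt, -⟩
      exact absurd hlt (by decide)
    · intro hc
      exfalso
      revert hc
      decide
  · constructor
    · rintro ⟨hlt, -⟩
      exact absurd hlt (by decide)
    · intro hc
      exfalso
      revert hc
      decide

lemma supp_facts {φ : Module.Dual F (strictUpper F 4)}
    (hS : Supp F 4 φ = {((0 : Fin 4), (1 : Fin 4)), ((0 : Fin 4), (2 : Fin 4)),
        ((1 : Fin 4), (3 : Fin 4))} ∨
      Supp F 4 φ = {((0 : Fin 4), (2 : Fin 4)), ((1 : Fin 4), (3 : Fin 4))}) :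
    φ (E02 F) ≠ 0 ∧ φ (E13 F) ≠ 0 ∧ φ (E03 F) = 0 ∧ φ (E12 F) = 0 ∧ φ (E23 F) = 0 := by
  have m02 : ((0 : Fin 4), (2 : Fin 4)) ∈ Supp F 4 φ := by
    rcases hS with h | h <;> rw [h] <;> simp
  have m13 : ((1 : Fin 4), (3 : Fin 4)) ∈ Supp F 4 φ := by
    rcases hS with h | h <;> rw [h] <;> simp
  have n03 : ((0 : Fin 4), (3 : Fin 4)) ∉ Supp F 4 φ := by
    rcases hS with h | h <;> rw [h] <;> intro hc <;>
      simp only [Set.mem_insert_iff, Set.mem_singleton_iff] at hc <;> revert hc <;> decide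
  have n12 : ((1 : Fin 4), (2 : Fin 4)) ∉ Supp F 4 φ := by
    rcases hS with h | h <;> rw [h] <;> intro hc <;>
      simp only [Set.mem_insert_iff, Set.mem_singleton_iff] at hc <;> revert hc <;> decide
  have n23 : ((2 : Fin 4), (3 : Fin 4)) ∉ Supp F 4 φ := by
    rcases hS with h | h <;> rw [h] <;> intro hc <;>
      simp only [Set.mem_insert_iff, Set.mem_singleton_iff] at hc <;> revert hc <;> decide
  obtain ⟨hlt02, hv02⟩ := m02
  obtain ⟨hlt13, hv13⟩ := m13
  refine ⟨hv02, hv13, ?_, ?_, ?_⟩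
  · by_contra hz
    exact n03 ⟨by decide, hz⟩
  · by_contra hz
    exact n12 ⟨by decide, hz⟩
  · by_contra hz
    exact n23 ⟨by decide, hz⟩

lemma main_part1 {f : Module.Dual F (strictUpper F 4)} (h03 : f (E03 F) = 0)
    (hb : f (E02 F) ≠ 0) (he : f (E13 F) ≠ 0) :
    ∃! h : Module.Dual F (strictUpper F 4), h ∈ coadjOrbit F 4 f ∧
      (Supp F 4 h = {((0 : Fin 4), (1 : Fin 4)), ((0 : Fin 4), (2 : Fin 4)),
          ((1 : Fin 4), (3 : Fin 4))} ∨
       Supp F 4 h = {((0 : Fin 4), (2 : Fin 4)), ((1 : Fin 4), (3 : Fin 4))}) := by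
  set b := f (E02 F) with hbdef
  set e := f (E13 F) with hedef
  set d := f (E12 F) with hddef
  set k := f (E23 F) with hkdef
  set g : Matrix (Fin 4) (Fin 4) F :=
    !![1, d / b, 0, 0; 0, 1, k / e, 0; 0, 0, 1, 0; 0, 0, 0, 1] with hgdef
  set g' : Matrix (Fin 4) (Fin 4) F :=
    !![1, -(d / b), d / b * (k / e), 0; 0, 1, -(k / e), 0; 0, 0, 1, 0; 0, 0, 0, 1] with hg'def
  have hg : IsUnitriangular g := by
    constructor
    · intro i; fin_cases i <;> simp [hgdef]
    · intro i j hij; fin_cases i <;> fin_cases j <;>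
        first
          | (exfalso; revert hij; decide)
          | simp [hgdef, Matrix.vecHead, Matrix.vecTail]
  have hg' : IsUnitriangular g' := by
    constructor
    · intro i; fin_cases i <;> simp [hg'def]
    · intro i j hij; fin_cases i <;> fin_cases j <;>
        first
          | (exfalso; revert hij; decide)
          | simp [hg'def, Matrix.vecHead, Matrix.vecTail]
  have hgg' : g * g' = 1 := by
    ext i j
    fin_cases i <;> fin_cases j <;>
      simp [hgdef, hg'def, Matrix.mul_apply, Fin.sum_univ_four, Matrix.one_apply,
        Matrix.vecHead, Matrix.vecTail] <;>
      field_simp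
  have hg'g : g' * g = 1 := by
    ext i j
    fin_cases i <;> fin_cases j <;>
      simp [hgdef, hg'def, Matrix.mul_apply, Fin.sum_univ_four, Matrix.one_apply,
        Matrix.vecHead, Matrix.vecTail] <;>
      field_simp
  set h : Module.Dual F (strictUpper F 4) := f ∘ₗ conjMap g g' hg hg' with hhdef
  have hmem : h ∈ coadjOrbit F 4 f := mem_orbit_of hg hg' hgg' hg'g f
  have w12 : h (E12 F) = 0 := by
    rw [hhdef, LinearMap.comp_apply, dual_apply f]
    simp [conjMap, E01, E02, E03, E12, E13, E23, Eelt, Matrix.mul_apply, Fin.sum_univ_four,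
      Matrix.single, Matrix.of_apply, hgdef, hg'def, h03, ← hbdef, ← hedef,
      ← hddef, ← hkdef, Matrix.vecHead, Matrix.vecTail, Matrix.vecMul, dotProduct]
    field_simp
    show -(d * f (E02 F)) + b * f (E12 F) = b * 0
    rw [← hbdef, ← hddef]
    ring
  have w23 : h (E23 F) = 0 := by
    rw [hhdef, LinearMap.comp_apply, dual_apply f]
    simp [conjMap, E01, E02, E03, E12, E13, E23, Eelt, Matrix.mul_apply, Fin.sum_univ_four,
      Matrix.single, Matrix.of_apply, hgdef, hg'def, h03, ← hbdef, ← hedef,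
      ← hddef, ← hkdef, Matrix.vecHead, Matrix.vecTail, Matrix.vecMul, dotProduct]
    field_simp
    show k * (d * f (E03 F) + -(b * f (E13 F))) + b * e * f (E23 F) = b * e * 0
    rw [h03, ← hedef, ← hkdef]
    ring
  obtain ⟨w03, hrest⟩ := orbit_vals hmem
  obtain ⟨w02, w13, winv⟩ := hrest h03
  rw [w23, mul_zero, add_zero] at winv
  rw [h03] at w03
  refine ⟨h, ⟨hmem, ?_⟩, ?_⟩
  · by_cases hc : e * f (E01 F) + b * k = 0
    · right
      refine supp_S2 ?_ (by rw [w02]; exact hb) w03 w12 (by rw [w13]; exact he) w23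
      have : e * h (E01 F) = 0 := by rw [winv]; linear_combination hc
      rcases mul_eq_zero.mp this with h' | h'
      · exact absurd h' he
      · exact h'
    · left
      refine supp_S1 ?_ (by rw [w02]; exact hb) w03 w12 (by rw [w13]; exact he) w23
      intro hz
      rw [hz, mul_zero] at winv
      exact hc winv.symm
  · rintro y ⟨hyorb, hysupp⟩
    obtain ⟨yb, ye, y03, y12, y23⟩ := supp_facts hysupp
    obtain ⟨z03, zrest⟩ := orbit_vals hyorb
    obtain ⟨z02, z13, zinv⟩ := zrest h03
    rw [y23, mul_zero, add_zero] at zinv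
    refine dual_ext ?_ (by rw [z02, w02]) (by rw [z03, w03, h03]) (by rw [y12, w12])
      (by rw [z13, w13]) (by rw [y23, w23])
    have : e * y (E01 F) = e * h (E01 F) := by rw [zinv, winv]
    exact mul_left_cancel₀ he this

end OrbitAux
end Aux


/-- `n = 4`: every coadjoint orbit of dimension 2 which is extensive for `A₃`
(i.e. `(1,3), (2,4) ∈ NSupp f`, written 0-based as `(0,2), (1,3)`) contains exactly one
linear form `h` with `Supp h = {(1,2), (1,3), (2,4)}` or `Supp h = {(1,3), (2,4)}`
(0-based: `{(0,1), (0,2), (1,3)}` or `{(0,2), (1,3)}`); conversely, every `h` with such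
support has `rk B_h = 2` and `(1,3), (2,4) ∈ NSupp h`. -/
theorem dim_two_extensive_orbits_n4 (F : Type*) [Field F] [IsAlgClosed F] [CharZero F] :
    (∀ f : Module.Dual F (strictUpper F 4), rkB F 4 f = 2 →
      (((0 : Fin 4), (2 : Fin 4)) ∈ NSupp F 4 f) →
      (((1 : Fin 4), (3 : Fin 4)) ∈ NSupp F 4 f) →
      ∃! h : Module.Dual F (strictUpper F 4), h ∈ coadjOrbit F 4 f ∧
        (Supp F 4 h = {((0 : Fin 4), (1 : Fin 4)), ((0 : Fin 4), (2 : Fin 4)),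
            ((1 : Fin 4), (3 : Fin 4))} ∨
         Supp F 4 h = {((0 : Fin 4), (2 : Fin 4)), ((1 : Fin 4), (3 : Fin 4))})) ∧
    (∀ h : Module.Dual F (strictUpper F 4),
      (Supp F 4 h = {((0 : Fin 4), (1 : Fin 4)), ((0 : Fin 4), (2 : Fin 4)),
          ((1 : Fin 4), (3 : Fin 4))} ∨
       Supp F 4 h = {((0 : Fin 4), (2 : Fin 4)), ((1 : Fin 4), (3 : Fin 4))}) →
      rkB F 4 h = 2 ∧ (((0 : Fin 4), (2 : Fin 4)) ∈ NSupp F 4 h) ∧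
        (((1 : Fin 4), (3 : Fin 4)) ∈ NSupp F 4 h)) := by
  constructor
  · intro f hrk h02 h13
    have h03 : f (OrbitAux.E03 F) = 0 := by
      by_contra hz
      have := OrbitAux.rank_ge_three hz
      omega
    have hb : f (OrbitAux.E02 F) ≠ 0 := by
      obtain ⟨f', hforb, hlt, hv⟩ := h02
      obtain ⟨-, hrest⟩ := OrbitAux.orbit_vals hforb
      obtain ⟨v02, -, -⟩ := hrest h03
      have hv' : f' (OrbitAux.E02 F) ≠ 0 := hv
      rw [v02] at hv'
      exact hv'
    have he : f (OrbitAux.E13 F) ≠ 0 := by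
      obtain ⟨f', hforb, hlt, hv⟩ := h13
      obtain ⟨-, hrest⟩ := OrbitAux.orbit_vals hforb
      obtain ⟨-, v13, -⟩ := hrest h03
      have hv' : f' (OrbitAux.E13 F) ≠ 0 := hv
      rw [v13] at hv'
      exact hv'
    exact OrbitAux.main_part1 h03 hb he
  · intro h hS
    obtain ⟨h02, h13, h03, h12, h23⟩ := OrbitAux.supp_facts hS
    refine ⟨OrbitAux.rank_eq_two h03 h02, ?_, ?_⟩
    · exact ⟨h, OrbitAux.self_mem_orbit h, ⟨by decide, h02⟩⟩
    · exact ⟨h, OrbitAux.self_mem_orbit h, ⟨by decide, h13⟩⟩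
end
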